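/- Program Automaton Soundness: for every NetKAT program p whose dup labels are pairwise distinct, all packets pk_in, pk₁, …, pk_n (n ≥ 0), and pk_out, the history pk_out :: pk_n :: ⋯ :: pk₁ :: [] (that is, pk_out followed by pk_n down to pk₁; just [pk_out] when n = 0) belongs to ⟦p⟧ [pk_in] if and only if accept 0 (pk_in, [pk₁, …, pk_n], pk_out) holds in the automaton A(p). -/

import Mathlib

namespace NetKAT

/-- Packets: assignments of (natural-number) values to fields. -/
abbrev Packet (F : Type) := F → ℕ

/-- Histories: a nonempty list of packets, represented as (head packet, tail). -/
abbrev Hist (F : Type) := Packet F × List (Packet F)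

/-- NetKAT predicates. -/
inductive Pred (F : Type) where
  | id : Pred F
  | drop : Pred F
  | test : F → ℕ → Pred F
  | or : Pred F → Pred F → Pred F
  | and : Pred F → Pred F → Pred F
  | not : Pred F → Pred F
  deriving DecidableEq

/-- Labeled NetKAT programs: every occurrence of `dup` carries a label from `L`. -/
inductive LPol (F L : Type) where
  | filter : Pred F → LPol F L
  | mod : F → ℕ → LPol F L
  | union : LPol F L → LPol F L → LPol F L
  | seq : LPol F L → LPol F L → LPol F L
  | star : LPol F L → LPol F L
  | dup : L → LPol F L
  deriving DecidableEq

/-- Iterates of a packet-processing function. -/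
def iterRel {F : Type} (f : Hist F → Set (Hist F)) : ℕ → Hist F → Set (Hist F)
  | 0, h => {h}
  | i+1, h => ⋃ h' ∈ f h, iterRel f i h'

/-- Semantics of predicates (as filters on histories). -/
def predSem {F : Type} : Pred F → Hist F → Set (Hist F)
  | .id, h => {h}
  | .drop, _ => ∅
  | .test f n, h => if h.1 f = n then {h} else ∅
  | .or a b, h => predSem a h ∪ predSem b h
  | .and a b, h => ⋃ h' ∈ predSem a h, predSem b h'
  | .not a, h => {h} \ predSem a h

/-- Semantics of labeled NetKAT programs (labels do not affect the semantics). -/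
def polSem {F L : Type} [DecidableEq F] : LPol F L → Hist F → Set (Hist F)
  | .filter a, h => predSem a h
  | .mod f n, h => {(Function.update h.1 f n, h.2)}
  | .union p q, h => polSem p h ∪ polSem q h
  | .seq p q, h => ⋃ h' ∈ polSem p h, polSem q h'
  | .star p, h => ⋃ i : ℕ, iterRel (fun h' => polSem p h') i h
  | .dup _, h => {(h.1, h.1 :: h.2)}

/-- A program is dup-free if it contains no occurrence of `dup`. -/
def LPol.dupFree {F L : Type} : LPol F L → Prop
  | .filter _ => True
  | .mod _ _ => True
  | .union p q => p.dupFree ∧ q.dupFree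
  | .seq p q => p.dupFree ∧ q.dupFree
  | .star p => p.dupFree
  | .dup _ => False

/-- The list of dup labels occurring in a program. -/
def labelList {F L : Type} : LPol F L → List L
  | .filter _ => []
  | .mod _ _ => []
  | .union p q => labelList p ++ labelList q
  | .seq p q => labelList p ++ labelList q
  | .star p => labelList p
  | .dup l => [l]

variable {F L : Type} [DecidableEq F] [DecidableEq L]

/-- The local component `E⟦p⟧` of a program. -/
def EE : LPol F L → LPol F L
  | .filter a => .filter a
  | .mod f n => .mod f n
  | .union q r => .union (EE q) (EE r)
  | .seq q r => .seq (EE q) (EE r)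
  | .star q => .star (EE q)
  | .dup _ => .filter .drop

/-- The global components `D⟦p⟧` of a program: a finite set of triples `(d, ℓ, k)`. -/
def DD : LPol F L → Finset (LPol F L × L × LPol F L)
  | .filter _ => ∅
  | .mod _ _ => ∅
  | .union q r => DD q ∪ DD r
  | .seq q r =>
      (DD q).image (fun t => (t.1, t.2.1, LPol.seq t.2.2 r)) ∪
      (DD r).image (fun t => (LPol.seq (EE q) t.1, t.2.1, t.2.2))
  | .star q =>
      (DD q).image (fun t => (LPol.seq (EE (.star q)) t.1, t.2.1, LPol.seq t.2.2 (.star q)))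
  | .dup l => {(.filter .id, l, .filter .id)}

/-- Observation function of the automaton `A(p)`, given the continuation map `κ`
(state `none` is the initial state `0`, state `some ℓ` is the label `ℓ`):
`ε s pk = {pk' | [pk'] ∈ ⟦E⟦k_s⟧⟧ [pk]}`. -/
def obs (κ : Option L → LPol F L) (s : Option L) (pk : Packet F) : Set (Packet F) :=
  {pk' | ((pk', ([] : List (Packet F))) : Hist F) ∈
            polSem (EE (κ s)) ((pk, ([] : List (Packet F))) : Hist F)}

/-- Continuation function of the automaton `A(p)`, given the continuation map `κ`:
`δ s pk = {(pk', ℓ') | ∃ (d, ℓ', k) ∈ D⟦k_s⟧, [pk'] ∈ ⟦d⟧ [pk]}`. -/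
def trans (κ : Option L → LPol F L) (s : Option L) (pk : Packet F) :
    Set (Packet F × Option L) :=
  {q | ∃ l' d k, q.2 = some l' ∧ (d, l', k) ∈ DD (κ s) ∧
        ((q.1, ([] : List (Packet F))) : Hist F) ∈
          polSem d ((pk, ([] : List (Packet F))) : Hist F)}

/-- Acceptance of a guarded string `(pk_in, [pk₁, …, pk_n], pk_out)` from state `s`. -/
def accept (κ : Option L → LPol F L) :
    Option L → Packet F → List (Packet F) → Packet F → Prop
  | s, pkin, [], pkout => pkout ∈ obs κ s pkin
  | s, pkin, pk1 :: w, pkout =>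
      ∃ s', (pk1, s') ∈ trans κ s pkin ∧ accept κ s' pk1 w pkout

set_option linter.unusedSectionVars false

/-- Truth of a predicate on a packet. -/
def predHolds {F : Type} : Pred F → Packet F → Prop
  | .id, _ => True
  | .drop, _ => False
  | .test f n, pk => pk f = n
  | .or a b, pk => predHolds a pk ∨ predHolds b pk
  | .and a b, pk => predHolds a pk ∧ predHolds b pk
  | .not a, pk => ¬ predHolds a pk

lemma predSem_iff (a : Pred F) : ∀ (h h' : Hist F),
    h' ∈ predSem a h ↔ h' = h ∧ predHolds a h.1 := by
  induction a with
  | id => simp [predSem, predHolds]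
  | drop => simp [predSem, predHolds]
  | test f n => intro h h'; by_cases hc : h.1 f = n <;> simp [predSem, predHolds, hc]
  | or a b iha ihb => intro h h'; simp [predSem, predHolds, iha, ihb]; tauto
  | and a b iha ihb =>
      intro h h'
      simp only [predSem, predHolds, Set.mem_iUnion]
      constructor
      · rintro ⟨h'', hm, hm'⟩
        rw [iha] at hm; rw [ihb] at hm'
        exact ⟨hm'.1.trans hm.1, by rw [hm.1] at hm'; exact ⟨hm.2, hm'.2⟩⟩
      · rintro ⟨he, ha, hb⟩
        exact ⟨h, (iha _ _).2 ⟨rfl, ha⟩, (ihb _ _).2 ⟨he, hb⟩⟩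
  | not a iha =>
      intro h h'
      simp only [predSem, predHolds, Set.mem_diff, Set.mem_singleton_iff, iha]
      tauto

lemma EE_dupFree (p : LPol F L) : (EE p).dupFree := by
  induction p <;> simp_all [EE, LPol.dupFree]

lemma iterRel_tail_iff (f : Hist F → Set (Hist F))
    (hf : ∀ pk t pk' t', ((pk',t') : Hist F) ∈ f (pk,t) ↔
            t' = t ∧ ((pk',[]) : Hist F) ∈ f (pk,[])) :
    ∀ (i : ℕ) (pk : Packet F) (t : List (Packet F)) (pk' : Packet F) (t' : List (Packet F)),
      ((pk',t') : Hist F) ∈ iterRel f i (pk,t) ↔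
        t' = t ∧ ((pk',[]) : Hist F) ∈ iterRel f i (pk,[]) := by
  intro i
  induction i with
  | zero => intro pk t pk' t'; simp [iterRel, Prod.ext_iff]; tauto
  | succ i ih =>
      intro pk t pk' t'
      simp only [iterRel, Set.mem_iUnion]
      constructor
      · rintro ⟨⟨pk2, t2⟩, hm, hm'⟩
        obtain ⟨rfl, hm0⟩ := (hf _ _ _ _).1 hm
        obtain ⟨rfl, hm0'⟩ := (ih _ _ _ _).1 hm'
        exact ⟨rfl, ⟨(pk2, []), hm0, hm0'⟩⟩
      · rintro ⟨he, ⟨pk2, t2⟩, hm, hm'⟩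
        obtain ⟨rfl, hm0⟩ := (hf _ _ _ _).1 hm
        exact ⟨(pk2, t), (hf _ _ _ _).2 ⟨rfl, hm0⟩, (ih _ _ _ _).2 ⟨he, ((ih _ _ _ _).1 hm').2⟩⟩

lemma dupFree_iff (p : LPol F L) : p.dupFree →
    ∀ (pk : Packet F) (t : List (Packet F)) (pk' : Packet F) (t' : List (Packet F)),
      ((pk',t') : Hist F) ∈ polSem p (pk,t) ↔
        t' = t ∧ ((pk',[]) : Hist F) ∈ polSem p (pk,[]) := by
  induction p with
  | filter a =>
      intro _ pk t pk' t'
      simp only [polSem, predSem_iff, Prod.mk.injEq]; tauto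
  | mod f n =>
      intro _ pk t pk' t'
      simp only [polSem, Set.mem_singleton_iff, Prod.mk.injEq]; tauto
  | union p q ihp ihq =>
      rintro ⟨hp1, hp2⟩ pk t pk' t'
      simp only [polSem, Set.mem_union]
      constructor
      · rintro (hm | hm)
        · obtain ⟨he, h0⟩ := (ihp hp1 _ _ _ _).1 hm; exact ⟨he, Or.inl h0⟩
        · obtain ⟨he, h0⟩ := (ihq hp2 _ _ _ _).1 hm; exact ⟨he, Or.inr h0⟩
      · rintro ⟨he, (hm | hm)⟩
        · exact Or.inl ((ihp hp1 _ _ _ _).2 ⟨he, hm⟩)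
        · exact Or.inr ((ihq hp2 _ _ _ _).2 ⟨he, hm⟩)
  | seq p q ihp ihq =>
      rintro ⟨hp1, hp2⟩ pk t pk' t'
      simp only [polSem, Set.mem_iUnion]
      constructor
      · rintro ⟨⟨pk2, t2⟩, hm, hm'⟩
        obtain ⟨rfl, hm0⟩ := (ihp hp1 _ _ _ _).1 hm
        obtain ⟨rfl, hm0'⟩ := (ihq hp2 _ _ _ _).1 hm'
        exact ⟨rfl, ⟨(pk2, []), hm0, hm0'⟩⟩
      · rintro ⟨he, ⟨pk2, t2⟩, hm, hm'⟩
        obtain ⟨rfl, hm0⟩ := (ihp hp1 _ _ _ _).1 hm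
        exact ⟨(pk2, t), (ihp hp1 _ _ _ _).2 ⟨rfl, hm0⟩,
          (ihq hp2 _ _ _ _).2 ⟨he, ((ihq hp2 _ _ _ _).1 hm').2⟩⟩
  | star p ihp =>
      intro hp pk t pk' t'
      simp only [polSem, Set.mem_iUnion]
      constructor
      · rintro ⟨i, hi⟩
        obtain ⟨rfl, h0⟩ := (iterRel_tail_iff _ (ihp hp) i _ _ _ _).1 hi
        exact ⟨rfl, i, h0⟩
      · rintro ⟨he, i, hi⟩
        exact ⟨i, (iterRel_tail_iff _ (ihp hp) i _ _ _ _).2 ⟨he, hi⟩⟩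
  | dup l => intro hp; exact absurd hp (by simp [LPol.dupFree])

lemma iterRel_tail (f : Hist F → Set (Hist F))
    (hf : ∀ pk t h', h' ∈ f (pk,t) → ∃ s, h'.2 = s ++ t) :
    ∀ (i : ℕ) (pk : Packet F) (t : List (Packet F)) (h' : Hist F),
      h' ∈ iterRel f i (pk,t) → ∃ s, h'.2 = s ++ t := by
  intro i
  induction i with
  | zero => rintro pk t h' hm; rw [iterRel, Set.mem_singleton_iff] at hm; exact ⟨[], by simp [hm]⟩
  | succ i ih =>
      rintro pk t h' hm
      rw [iterRel] at hm
      simp only [Set.mem_iUnion] at hm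
      obtain ⟨⟨pk2, t2⟩, hm1, hm2⟩ := hm
      obtain ⟨s1, hs1⟩ := hf _ _ _ hm1
      simp only at hs1; subst hs1
      obtain ⟨s2, hs2⟩ := ih pk2 _ h' hm2
      exact ⟨s2 ++ s1, by simp [hs2]⟩

lemma polSem_tail (p : LPol F L) :
    ∀ (pk : Packet F) (t : List (Packet F)) (h' : Hist F),
      h' ∈ polSem p (pk,t) → ∃ s, h'.2 = s ++ t := by
  induction p with
  | filter a =>
      intro pk t h' hm; rw [polSem, predSem_iff] at hm; exact ⟨[], by simp [hm.1]⟩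
  | mod f n => intro pk t h' hm; rw [polSem, Set.mem_singleton_iff] at hm; exact ⟨[], by simp [hm]⟩
  | union p q ihp ihq =>
      intro pk t h' hm
      rcases hm with hm | hm
      · exact ihp _ _ _ hm
      · exact ihq _ _ _ hm
  | seq p q ihp ihq =>
      intro pk t h' hm
      rw [polSem] at hm
      simp only [Set.mem_iUnion] at hm
      obtain ⟨⟨pk2, t2⟩, hm1, hm2⟩ := hm
      obtain ⟨s1, hs1⟩ := ihp _ _ _ hm1
      simp only at hs1; subst hs1
      obtain ⟨s2, hs2⟩ := ihq _ _ _ hm2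
      exact ⟨s2 ++ s1, by simp [hs2]⟩
  | star p ihp =>
      intro pk t h' hm
      rw [polSem] at hm
      simp only [Set.mem_iUnion] at hm
      obtain ⟨i, hi⟩ := hm
      exact iterRel_tail _ (fun pk t h' => ihp pk t h') i pk t h' hi
  | dup l =>
      intro pk t h' hm; rw [polSem, Set.mem_singleton_iff] at hm
      exact ⟨[pk], by simp [hm]⟩

lemma iterRel_mono {f g : Hist F → Set (Hist F)} (hfg : ∀ h, f h ⊆ g h) :
    ∀ (i : ℕ) (h : Hist F), iterRel f i h ⊆ iterRel g i h := by
  intro i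
  induction i with
  | zero => intro h; exact subset_rfl
  | succ i ih =>
      intro h x hx
      rw [iterRel] at hx ⊢
      simp only [Set.mem_iUnion] at hx ⊢
      obtain ⟨h1, hm1, hm2⟩ := hx
      exact ⟨h1, hfg _ hm1, ih _ hm2⟩

lemma EE_sub (p : LPol F L) : ∀ h, polSem (EE p) h ⊆ polSem p h := by
  induction p with
  | filter a => intro h; exact subset_rfl
  | mod f n => intro h; exact subset_rfl
  | union p q ihp ihq =>
      intro h x hx
      rcases hx with hx | hx
      · exact Or.inl (ihp _ hx)
      · exact Or.inr (ihq _ hx)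
  | seq p q ihp ihq =>
      intro h x hx
      rw [EE] at hx
      simp only [polSem, Set.mem_iUnion] at hx ⊢
      obtain ⟨h1, hm1, hm2⟩ := hx
      exact ⟨h1, ihp _ hm1, ihq _ hm2⟩
  | star p ihp =>
      intro h x hx
      rw [EE, polSem] at hx
      simp only [polSem, Set.mem_iUnion] at hx ⊢
      obtain ⟨i, hi⟩ := hx
      exact ⟨i, iterRel_mono ihp i h hi⟩
  | dup l => intro h x hx; simp [EE, polSem, predSem] at hx

lemma iterRel_comp (f : Hist F → Set (Hist F)) :
    ∀ (i j : ℕ) (h h1 h2 : Hist F), h1 ∈ iterRel f i h → h2 ∈ iterRel f j h1 →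
      h2 ∈ iterRel f (i + j) h := by
  intro i
  induction i with
  | zero =>
      intro j h h1 h2 hm1 hm2
      rw [iterRel, Set.mem_singleton_iff] at hm1; subst hm1
      simpa using hm2
  | succ i ih =>
      intro j h h1 h2 hm1 hm2
      rw [iterRel] at hm1
      simp only [Set.mem_iUnion] at hm1
      obtain ⟨h', hm, hm'⟩ := hm1
      have : h2 ∈ iterRel f (i + j) h' := ih j h' h1 h2 hm' hm2
      show h2 ∈ iterRel f (i + 1 + j) h
      have he : i + 1 + j = (i + j) + 1 := by omega
      rw [he, iterRel]
      simp only [Set.mem_iUnion]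
      exact ⟨h', hm, this⟩

lemma mem_star (p : LPol F L) (h h' : Hist F) :
    h' ∈ polSem (.star p) h ↔ ∃ i, h' ∈ iterRel (fun h'' => polSem p h'') i h := by
  rw [polSem]; simp [Set.mem_iUnion]

lemma star_refl (p : LPol F L) (h : Hist F) : h ∈ polSem (.star p) h :=
  (mem_star p h h).2 ⟨0, by simp [iterRel]⟩

lemma star_trans (p : LPol F L) (h h1 h2 : Hist F)
    (hm1 : h1 ∈ polSem (.star p) h) (hm2 : h2 ∈ polSem (.star p) h1) :
    h2 ∈ polSem (.star p) h := by
  rw [mem_star] at hm1 hm2 ⊢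
  obtain ⟨i, hi⟩ := hm1
  obtain ⟨j, hj⟩ := hm2
  exact ⟨i + j, iterRel_comp _ i j h h1 h2 hi hj⟩

lemma sem_sub_star (p : LPol F L) (h : Hist F) : polSem p h ⊆ polSem (.star p) h := by
  intro x hx
  rw [mem_star]
  refine ⟨1, ?_⟩
  rw [iterRel]
  simp only [Set.mem_iUnion]
  exact ⟨x, hx, by simp [iterRel]⟩
/-- The fundamental decomposition theorem for NetKAT programs. -/
lemma fund (k : LPol F L) : ∀ (pk : Packet F) (t : List (Packet F)) (h' : Hist F),
    h' ∈ polSem k (pk,t) ↔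
      (h' ∈ polSem (EE k) (pk,t) ∨
        ∃ d l k', (d,l,k') ∈ DD k ∧ ∃ pk1 : Packet F,
          ((pk1,([]:List (Packet F))) : Hist F) ∈ polSem d ((pk,[]) : Hist F) ∧
          h' ∈ polSem k' (pk1, pk1::t)) := by
  induction k with
  | filter a => intro pk t h'; simp [EE, DD]
  | mod f n => intro pk t h'; simp [EE, DD]
  | dup l =>
      intro pk t h'
      constructor
      · intro hm
        rw [polSem, Set.mem_singleton_iff] at hm
        refine Or.inr ⟨.filter .id, l, .filter .id, by simp [DD], pk, ?_, ?_⟩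
        · simp [polSem, predSem]
        · simp [polSem, predSem, hm]
      · rintro (hm | ⟨d, l', k', hd, pk1, hm1, hm2⟩)
        · simp [EE, polSem, predSem] at hm
        · rw [DD, Finset.mem_singleton, Prod.mk.injEq, Prod.mk.injEq] at hd
          obtain ⟨rfl, rfl, rfl⟩ := hd
          rw [polSem] at hm1 hm2
          rw [predSem, Set.mem_singleton_iff] at hm1
          rw [Prod.mk.injEq] at hm1
          obtain ⟨rfl, -⟩ := hm1
          rw [predSem, Set.mem_singleton_iff] at hm2
          rw [polSem, Set.mem_singleton_iff]
          exact hm2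
  | union q r ihq ihr =>
      intro pk t h'
      constructor
      · rintro (hm | hm)
        · rcases (ihq _ _ _).1 hm with hE | ⟨d, l, k', hd, pk1, h1, h2⟩
          · exact Or.inl (Or.inl hE)
          · exact Or.inr ⟨d, l, k', Finset.mem_union_left _ hd, pk1, h1, h2⟩
        · rcases (ihr _ _ _).1 hm with hE | ⟨d, l, k', hd, pk1, h1, h2⟩
          · exact Or.inl (Or.inr hE)
          · exact Or.inr ⟨d, l, k', Finset.mem_union_right _ hd, pk1, h1, h2⟩
      · rintro (hE | ⟨d, l, k', hd, pk1, h1, h2⟩)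
        · rcases hE with hE | hE
          · exact Or.inl ((ihq _ _ _).2 (Or.inl hE))
          · exact Or.inr ((ihr _ _ _).2 (Or.inl hE))
        · rcases Finset.mem_union.1 hd with hd | hd
          · exact Or.inl ((ihq _ _ _).2 (Or.inr ⟨d, l, k', hd, pk1, h1, h2⟩))
          · exact Or.inr ((ihr _ _ _).2 (Or.inr ⟨d, l, k', hd, pk1, h1, h2⟩))
  | seq q r ihq ihr =>
      intro pk t h'
      constructor
      · intro hm
        rw [polSem] at hm
        simp only [Set.mem_iUnion] at hm
        obtain ⟨⟨pk2, t2⟩, hm1, hm2⟩ := hm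
        rcases (ihq pk t _).1 hm1 with hE | ⟨d, l, k0, hd, pk1, hd1, hd2⟩
        · obtain ⟨rfl, hE0⟩ := (dupFree_iff _ (EE_dupFree q) _ _ _ _).1 hE
          rcases (ihr pk2 _ h').1 hm2 with hE' | ⟨d, l, k0, hd, pk1, hd1, hd2⟩
          · refine Or.inl ?_
            rw [EE, polSem]; simp only [Set.mem_iUnion]
            exact ⟨(pk2, _), hE, hE'⟩
          · refine Or.inr ⟨.seq (EE q) d, l, k0, ?_, pk1, ?_, hd2⟩
            · rw [DD]
              exact Finset.mem_union_right _ (Finset.mem_image.2 ⟨(d, l, k0), hd, rfl⟩)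
            · rw [polSem]; simp only [Set.mem_iUnion]
              exact ⟨(pk2, []), hE0, hd1⟩
        · refine Or.inr ⟨d, l, .seq k0 r, ?_, pk1, hd1, ?_⟩
          · rw [DD]
            exact Finset.mem_union_left _ (Finset.mem_image.2 ⟨(d, l, k0), hd, rfl⟩)
          · rw [polSem]; simp only [Set.mem_iUnion]
            exact ⟨(pk2, t2), hd2, hm2⟩
      · rintro (hE | ⟨d, l, k', hd, pk1, hd1, hd2⟩)
        · rw [EE, polSem] at hE
          simp only [Set.mem_iUnion] at hE
          obtain ⟨⟨pk2, t2⟩, h1, h2⟩ := hE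
          rw [polSem]; simp only [Set.mem_iUnion]
          exact ⟨(pk2, t2), EE_sub q _ h1, EE_sub r _ h2⟩
        · rw [DD, Finset.mem_union] at hd
          rcases hd with hd | hd
          · obtain ⟨⟨d0, l0, k0⟩, hd0, heq⟩ := Finset.mem_image.1 hd
            simp only [Prod.mk.injEq] at heq
            obtain ⟨rfl, rfl, rfl⟩ := heq
            rw [polSem] at hd2; simp only [Set.mem_iUnion] at hd2
            obtain ⟨h1, hm1, hm2⟩ := hd2
            have hq : h1 ∈ polSem q (pk, t) :=
              (ihq pk t h1).2 (Or.inr ⟨_, _, _, hd0, pk1, hd1, hm1⟩)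
            rw [polSem]; simp only [Set.mem_iUnion]
            exact ⟨h1, hq, hm2⟩
          · obtain ⟨⟨d0, l0, k0⟩, hd0, heq⟩ := Finset.mem_image.1 hd
            simp only [Prod.mk.injEq] at heq
            obtain ⟨rfl, rfl, rfl⟩ := heq
            rw [polSem] at hd1; simp only [Set.mem_iUnion] at hd1
            obtain ⟨⟨pk2, t2⟩, hmq, hmd⟩ := hd1
            obtain ⟨rfl, hmq0⟩ := (dupFree_iff _ (EE_dupFree q) _ _ _ _).1 hmq
            have hq : ((pk2, t) : Hist F) ∈ polSem q (pk, t) :=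
              EE_sub q _ ((dupFree_iff _ (EE_dupFree q) _ _ _ _).2 ⟨rfl, hmq0⟩)
            have hr : h' ∈ polSem r (pk2, t) :=
              (ihr pk2 t h').2 (Or.inr ⟨_, _, _, hd0, pk1, hmd, hd2⟩)
            rw [polSem]; simp only [Set.mem_iUnion]
            exact ⟨(pk2, t), hq, hr⟩
  | star q ihq =>
      intro pk t h'
      constructor
      · intro hm
        rw [polSem] at hm; simp only [Set.mem_iUnion] at hm
        obtain ⟨i, hi⟩ := hm
        have key : ∀ (i : ℕ) (pk : Packet F),
            h' ∈ iterRel (fun h'' => polSem q h'') i (pk, t) →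
            (h' ∈ polSem (EE (.star q)) (pk,t) ∨
              ∃ d l k', (d,l,k') ∈ DD (LPol.star q) ∧ ∃ pk1 : Packet F,
                ((pk1,([]:List (Packet F))) : Hist F) ∈ polSem d ((pk,[]) : Hist F) ∧
                h' ∈ polSem k' (pk1, pk1::t)) := by
          intro i
          induction i with
          | zero =>
              intro pk hi
              rw [iterRel, Set.mem_singleton_iff] at hi; subst hi
              exact Or.inl (star_refl (EE q) _)
          | succ i ih =>
              intro pk hi
              rw [iterRel] at hi; simp only [Set.mem_iUnion] at hi
              obtain ⟨⟨pk2, t2⟩, hm1, hm2⟩ := hi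
              rcases (ihq pk t _).1 hm1 with hE | ⟨d, l, k0, hd, pk1, hd1, hd2⟩
              · obtain ⟨rfl, hE0⟩ := (dupFree_iff _ (EE_dupFree q) _ _ _ _).1 hE
                rcases ih pk2 hm2 with hE' | ⟨d, l, k', hd, pk1, hd1, hd2⟩
                · exact Or.inl (star_trans (EE q) _ _ _ (sem_sub_star (EE q) _ hE) hE')
                · obtain ⟨⟨d0, l0, k0⟩, hd0, heq⟩ := Finset.mem_image.1 hd
                  simp only [Prod.mk.injEq] at heq
                  obtain ⟨rfl, rfl, rfl⟩ := heq
                  rw [polSem] at hd1; simp only [Set.mem_iUnion] at hd1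
                  obtain ⟨⟨pk3, t3⟩, hms, hmd⟩ := hd1
                  obtain ⟨rfl, hms0⟩ :=
                    (dupFree_iff _ (EE_dupFree (.star q)) _ _ _ _).1 hms
                  refine Or.inr ⟨_, _, _,
                    Finset.mem_image.2 ⟨(d0, l0, k0), hd0, rfl⟩, pk1, ?_, hd2⟩
                  rw [polSem]; simp only [Set.mem_iUnion]
                  refine ⟨(pk3, []), ?_, hmd⟩
                  exact star_trans (EE q) _ _ _ (sem_sub_star (EE q) _ hE0) hms0
              · refine Or.inr ⟨_, _, _,
                  Finset.mem_image.2 ⟨(d, l, k0), hd, rfl⟩, pk1, ?_, ?_⟩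
                · rw [polSem]; simp only [Set.mem_iUnion]
                  exact ⟨(pk, []), star_refl (EE q) _, hd1⟩
                · rw [polSem]; simp only [Set.mem_iUnion]
                  refine ⟨(pk2, t2), hd2, ?_⟩
                  exact (mem_star q _ _).2 ⟨i, hm2⟩
        exact key i pk hi
      · rintro (hE | ⟨d, l, k', hd, pk1, hd1, hd2⟩)
        · exact EE_sub (.star q) _ hE
        · rw [DD] at hd
          obtain ⟨⟨d0, l0, k0⟩, hd0, heq⟩ := Finset.mem_image.1 hd
          simp only [Prod.mk.injEq] at heq
          obtain ⟨rfl, rfl, rfl⟩ := heq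
          rw [polSem] at hd1; simp only [Set.mem_iUnion] at hd1
          obtain ⟨⟨pk2, t2⟩, hmq, hmd⟩ := hd1
          obtain ⟨rfl, hmq0⟩ := (dupFree_iff _ (EE_dupFree (.star q)) _ _ _ _).1 hmq
          rw [polSem] at hd2; simp only [Set.mem_iUnion] at hd2
          obtain ⟨h3, hm3, hm4⟩ := hd2
          have h2q : h3 ∈ polSem q (pk2, t) :=
            (ihq pk2 t h3).2 (Or.inr ⟨_, _, _, hd0, pk1, hmd, hm3⟩)
          have hstar1 : ((pk2, t) : Hist F) ∈ polSem (.star q) (pk, t) :=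
            EE_sub (.star q) _
              ((dupFree_iff _ (EE_dupFree (.star q)) _ _ _ _).2 ⟨rfl, hmq0⟩)
          exact star_trans _ _ _ _ hstar1
            (star_trans _ _ _ _ (sem_sub_star _ _ h2q) hm4)
lemma DD_label (p : LPol F L) :
    ∀ d l k, (d, l, k) ∈ DD p → l ∈ labelList p := by
  induction p with
  | filter a => intro d l k h; simp [DD] at h
  | mod f n => intro d l k h; simp [DD] at h
  | union q r ihq ihr =>
      intro d l k h
      rw [DD, Finset.mem_union] at h
      rw [labelList, List.mem_append]
      rcases h with h | h
      · exact Or.inl (ihq _ _ _ h)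
      · exact Or.inr (ihr _ _ _ h)
  | seq q r ihq ihr =>
      intro d l k h
      rw [DD, Finset.mem_union] at h
      rw [labelList, List.mem_append]
      rcases h with h | h
      · obtain ⟨⟨d0, l0, k0⟩, h0, heq⟩ := Finset.mem_image.1 h
        simp only [Prod.mk.injEq] at heq
        obtain ⟨-, rfl, -⟩ := heq
        exact Or.inl (ihq _ _ _ h0)
      · obtain ⟨⟨d0, l0, k0⟩, h0, heq⟩ := Finset.mem_image.1 h
        simp only [Prod.mk.injEq] at heq
        obtain ⟨-, rfl, -⟩ := heq
        exact Or.inr (ihr _ _ _ h0)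
  | star q ihq =>
      intro d l k h
      rw [DD] at h
      obtain ⟨⟨d0, l0, k0⟩, h0, heq⟩ := Finset.mem_image.1 h
      simp only [Prod.mk.injEq] at heq
      obtain ⟨-, rfl, -⟩ := heq
      rw [labelList]
      exact ihq _ _ _ h0
  | dup l0 =>
      intro d l k h
      rw [DD, Finset.mem_singleton, Prod.mk.injEq, Prod.mk.injEq] at h
      obtain ⟨-, rfl, -⟩ := h
      simp [labelList]

lemma DD_unique (p : LPol F L) : (labelList p).Nodup →
    ∀ d l k d' k', (d, l, k) ∈ DD p → (d', l, k') ∈ DD p → k = k' := by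
  induction p with
  | filter a => intro _ d l k d' k' h; simp [DD] at h
  | mod f n => intro _ d l k d' k' h; simp [DD] at h
  | union q r ihq ihr =>
      intro hnd d l k d' k' h h'
      rw [labelList, List.nodup_append] at hnd
      obtain ⟨hq, hr, hdis⟩ := hnd
      rw [DD, Finset.mem_union] at h h'
      rcases h with h | h <;> rcases h' with h' | h'
      · exact ihq hq _ _ _ _ _ h h'
      · exact (hdis _ (DD_label _ _ _ _ h) _ (DD_label _ _ _ _ h') rfl).elim
      · exact (hdis _ (DD_label _ _ _ _ h') _ (DD_label _ _ _ _ h) rfl).elim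
      · exact ihr hr _ _ _ _ _ h h'
  | seq q r ihq ihr =>
      intro hnd d l k d' k' h h'
      rw [labelList, List.nodup_append] at hnd
      obtain ⟨hq, hr, hdis⟩ := hnd
      rw [DD, Finset.mem_union] at h h'
      rcases h with h | h <;> rcases h' with h' | h'
      · obtain ⟨⟨d0, l0, k0⟩, h0, heq⟩ := Finset.mem_image.1 h
        obtain ⟨⟨d1, l1, k1⟩, h1, heq'⟩ := Finset.mem_image.1 h'
        simp only [Prod.mk.injEq] at heq heq'
        obtain ⟨-, rfl, rfl⟩ := heq
        obtain ⟨-, heq2, rfl⟩ := heq'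
        subst heq2
        rw [ihq hq _ _ _ _ _ h0 h1]
      · obtain ⟨⟨d0, l0, k0⟩, h0, heq⟩ := Finset.mem_image.1 h
        obtain ⟨⟨d1, l1, k1⟩, h1, heq'⟩ := Finset.mem_image.1 h'
        simp only [Prod.mk.injEq] at heq heq'
        obtain ⟨-, rfl, -⟩ := heq
        obtain ⟨-, heq2, -⟩ := heq'
        subst heq2
        exact (hdis _ (DD_label _ _ _ _ h0) _ (DD_label _ _ _ _ h1) rfl).elim
      · obtain ⟨⟨d0, l0, k0⟩, h0, heq⟩ := Finset.mem_image.1 h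
        obtain ⟨⟨d1, l1, k1⟩, h1, heq'⟩ := Finset.mem_image.1 h'
        simp only [Prod.mk.injEq] at heq heq'
        obtain ⟨-, rfl, -⟩ := heq
        obtain ⟨-, heq2, -⟩ := heq'
        subst heq2
        exact (hdis _ (DD_label _ _ _ _ h1) _ (DD_label _ _ _ _ h0) rfl).elim
      · obtain ⟨⟨d0, l0, k0⟩, h0, heq⟩ := Finset.mem_image.1 h
        obtain ⟨⟨d1, l1, k1⟩, h1, heq'⟩ := Finset.mem_image.1 h'
        simp only [Prod.mk.injEq] at heq heq'
        obtain ⟨-, rfl, rfl⟩ := heq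
        obtain ⟨-, heq2, rfl⟩ := heq'
        subst heq2
        exact ihr hr _ _ _ _ _ h0 h1
  | star q ihq =>
      intro hnd d l k d' k' h h'
      rw [labelList] at hnd
      rw [DD] at h h'
      obtain ⟨⟨d0, l0, k0⟩, h0, heq⟩ := Finset.mem_image.1 h
      obtain ⟨⟨d1, l1, k1⟩, h1, heq'⟩ := Finset.mem_image.1 h'
      simp only [Prod.mk.injEq] at heq heq'
      obtain ⟨-, rfl, rfl⟩ := heq
      obtain ⟨-, heq2, rfl⟩ := heq'
      subst heq2
      rw [ihq hnd _ _ _ _ _ h0 h1]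
  | dup l0 =>
      intro _ d l k d' k' h h'
      rw [DD, Finset.mem_singleton, Prod.mk.injEq, Prod.mk.injEq] at h h'
      rw [h.2.2, h'.2.2]

lemma DD_closed (p : LPol F L) :
    ∀ d l k, (d, l, k) ∈ DD p →
      ∀ d2 l2 k2, (d2, l2, k2) ∈ DD k → ∃ d3, (d3, l2, k2) ∈ DD p := by
  induction p with
  | filter a => intro d l k h; simp [DD] at h
  | mod f n => intro d l k h; simp [DD] at h
  | union q r ihq ihr =>
      intro d l k h d2 l2 k2 h2
      rw [DD, Finset.mem_union] at h
      rcases h with h | h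
      · obtain ⟨d3, h3⟩ := ihq _ _ _ h _ _ _ h2
        exact ⟨d3, by rw [DD]; exact Finset.mem_union_left _ h3⟩
      · obtain ⟨d3, h3⟩ := ihr _ _ _ h _ _ _ h2
        exact ⟨d3, by rw [DD]; exact Finset.mem_union_right _ h3⟩
  | seq q r ihq ihr =>
      intro d l k h d2 l2 k2 h2
      rw [DD, Finset.mem_union] at h
      rcases h with h | h
      · obtain ⟨⟨d0, l0, k0⟩, h0, heq⟩ := Finset.mem_image.1 h
        simp only [Prod.mk.injEq] at heq
        obtain ⟨-, rfl, rfl⟩ := heq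
        -- h2 : (d2, l2, k2) ∈ DD (k0.seq r)
        rw [DD, Finset.mem_union] at h2
        rcases h2 with h2 | h2
        · obtain ⟨⟨d4, l4, k4⟩, h4, heq'⟩ := Finset.mem_image.1 h2
          simp only [Prod.mk.injEq] at heq'
          obtain ⟨-, rfl, rfl⟩ := heq'
          obtain ⟨d3, h3⟩ := ihq _ _ _ h0 _ _ _ h4
          refine ⟨d3, ?_⟩
          rw [DD]
          exact Finset.mem_union_left _ (Finset.mem_image.2 ⟨(d3, l4, k4), h3, rfl⟩)
        · obtain ⟨⟨d4, l4, k4⟩, h4, heq'⟩ := Finset.mem_image.1 h2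
          simp only [Prod.mk.injEq] at heq'
          obtain ⟨-, rfl, rfl⟩ := heq'
          refine ⟨.seq (EE q) d4, ?_⟩
          rw [DD]
          exact Finset.mem_union_right _ (Finset.mem_image.2 ⟨(d4, l4, k4), h4, rfl⟩)
      · obtain ⟨⟨d0, l0, k0⟩, h0, heq⟩ := Finset.mem_image.1 h
        simp only [Prod.mk.injEq] at heq
        obtain ⟨-, rfl, rfl⟩ := heq
        obtain ⟨d3, h3⟩ := ihr _ _ _ h0 _ _ _ h2
        refine ⟨.seq (EE q) d3, ?_⟩
        rw [DD]
        exact Finset.mem_union_right _ (Finset.mem_image.2 ⟨(d3, l2, k2), h3, rfl⟩)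
  | star q ihq =>
      intro d l k h d2 l2 k2 h2
      rw [DD] at h
      obtain ⟨⟨d0, l0, k0⟩, h0, heq⟩ := Finset.mem_image.1 h
      simp only [Prod.mk.injEq] at heq
      obtain ⟨-, rfl, rfl⟩ := heq
      -- h2 : (d2, l2, k2) ∈ DD (k0.seq (.star q))
      rw [DD, Finset.mem_union] at h2
      rcases h2 with h2 | h2
      · obtain ⟨⟨d4, l4, k4⟩, h4, heq'⟩ := Finset.mem_image.1 h2
        simp only [Prod.mk.injEq] at heq'
        obtain ⟨-, rfl, rfl⟩ := heq'
        obtain ⟨d3, h3⟩ := ihq _ _ _ h0 _ _ _ h4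
        refine ⟨.seq (EE (.star q)) d3, ?_⟩
        rw [DD]
        exact Finset.mem_image.2 ⟨(d3, l4, k4), h3, rfl⟩
      · obtain ⟨⟨d4, l4, k4⟩, h4, heq'⟩ := Finset.mem_image.1 h2
        simp only [Prod.mk.injEq] at heq'
        obtain ⟨-, rfl, rfl⟩ := heq'
        exact ⟨d4, h4⟩
  | dup l0 =>
      intro d l k h d2 l2 k2 h2
      rw [DD, Finset.mem_singleton, Prod.mk.injEq, Prod.mk.injEq] at h
      obtain ⟨-, -, rfl⟩ := h
      simp [DD] at h2

lemma main_aux (p : LPol F L) (κ : Option L → LPol F L)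
    (hcomp : ∀ d l k, (d, l, k) ∈ DD p → κ (some l) = k) :
    ∀ (w : List (Packet F)) (pk pkout : Packet F) (t : List (Packet F)) (s : Option L),
      (∀ d l k, (d, l, k) ∈ DD (κ s) → ∃ d', (d', l, k) ∈ DD p) →
      (((pkout, w.reverse ++ t) : Hist F) ∈ polSem (κ s) (pk, t) ↔
        accept κ s pk w pkout) := by
  intro w
  induction w with
  | nil =>
      intro pk pkout t s hsub
      rw [List.reverse_nil, List.nil_append, fund]
      simp only [accept, obs, Set.mem_setOf_eq]
      constructor
      · rintro (hE | ⟨d, l, k', hd, pk1, hd1, hd2⟩)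
        · exact ((dupFree_iff _ (EE_dupFree _) _ _ _ _).1 hE).2
        · obtain ⟨s2, hs2⟩ := polSem_tail k' _ _ _ hd2
          simp only at hs2
          have hlen := congrArg List.length hs2
          simp [List.length_append] at hlen
          omega
      · intro hacc
        exact Or.inl ((dupFree_iff _ (EE_dupFree _) _ _ _ _).2 ⟨rfl, hacc⟩)
  | cons pk1 w ih =>
      intro pk pkout t s hsub
      rw [fund]
      simp only [accept]
      constructor
      · rintro (hE | ⟨d, l, k', hd, pk2, hd1, hd2⟩)
        · have := ((dupFree_iff _ (EE_dupFree _) _ _ _ _).1 hE).1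
          have hlen := congrArg List.length this
          simp [List.length_append] at hlen
          omega
        · obtain ⟨s2, hs2⟩ := polSem_tail k' _ _ _ hd2
          simp only at hs2
          rw [List.reverse_cons, List.append_assoc] at hs2
          have hlen : (List.reverse w).length = s2.length := by
            have h5 := congrArg List.length hs2
            simp [List.length_append] at h5
            simp only [List.length_reverse]
            omega
          obtain ⟨heq1, heq2⟩ := List.append_inj hs2 hlen
          have hpk : pk1 = pk2 := by injection heq2
          subst hpk
          obtain ⟨d', hd'⟩ := hsub _ _ _ hd
          have hk : κ (some l) = k' := hcomp _ _ _ hd'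
          refine ⟨some l, ⟨l, d, k', rfl, hd, hd1⟩, ?_⟩
          rw [← ih pk1 pkout (pk1 :: t) (some l)
            (fun d2 l2 k2 h2 => DD_closed p _ _ _ hd' _ _ _ (by rw [hk] at h2; exact h2))]
          rw [hk]
          rw [List.reverse_cons, List.append_assoc] at hd2
          exact hd2
      · rintro ⟨s', ⟨l, d, k0, rfl, hd, hd1⟩, hacc⟩
        obtain ⟨d', hd'⟩ := hsub _ _ _ hd
        have hk : κ (some l) = k0 := hcomp _ _ _ hd'
        refine Or.inr ⟨d, l, k0, hd, pk1, hd1, ?_⟩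
        have := (ih pk1 pkout (pk1 :: t) (some l)
          (fun d2 l2 k2 h2 => DD_closed p _ _ _ hd' _ _ _ (by rw [hk] at h2; exact h2))).2 hacc
        rw [hk] at this
        rw [List.reverse_cons, List.append_assoc]
        exact this

/-- **Program Automaton Soundness.** For a program `p` with pairwise-distinct dup
labels, a history `pk_out :: pk_n :: ⋯ :: pk₁ :: []` belongs to `⟦p⟧ [pk_in]` iff the
automaton `A(p)` accepts the guarded string `(pk_in, [pk₁, …, pk_n], pk_out)` from the
start state `0` (represented by `none`; `κ` assigns to each state its continuation:
`κ none = p`, and `κ (some ℓ)` is the unique continuation `k_ℓ` of `ℓ` in `D⟦p⟧`). -/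
theorem automaton_soundness [Fintype F] (p : LPol F L)
    (hnd : (labelList p).Nodup)
    (κ : Option L → LPol F L) (hκ0 : κ none = p)
    (hκ : ∀ l ∈ labelList p, ∃ d, (d, l, κ (some l)) ∈ DD p)
    (pkin pkout : Packet F) (w : List (Packet F)) :
    ((pkout, w.reverse) : Hist F) ∈
        polSem p ((pkin, ([] : List (Packet F))) : Hist F)
      ↔ accept κ none pkin w pkout := by
  have hcomp : ∀ d l k, (d, l, k) ∈ DD p → κ (some l) = k := by
    intro d l k hd
    obtain ⟨d', hd'⟩ := hκ l (DD_label p _ _ _ hd)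
    exact DD_unique p hnd _ _ _ _ _ hd' hd
  have h := main_aux p κ hcomp w pkin pkout [] none
    (by intro d l k hm; rw [hκ0] at hm; exact ⟨d, hm⟩)
  rw [hκ0, List.append_nil] at h
  exact h

end NetKAT
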